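/- Let 𝒜 be a minimal weak deterministic Büchi automaton over the alphabet Σ^d ∪ {⋆} such that L(𝒜) ⊆ (Σ^d)^*⋆(Σ^d)^ω and δ(q₀,(0,…,0)) = q₀. Then L(𝒜) is saturated if and only if for every 0 ≤ f < d, every state q of the form δ(q₀,x) for some finite word x over Σ^d ∪ {⋆}, and every 𝐚 ∈ Σ^d with a_f ≤ b−2, the automata (𝒜^{(b−1)@f})_{δ(q,𝐚)} and (𝒜^{0@f})_{δ(q,𝐚')} accept the same language, where 𝐚' is the tuple agreeing with 𝐚 except that its f-th component is a_f + 1. -/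

import Mathlib

/-- A deterministic Büchi automaton over alphabet `A` with states `Q`. -/
structure DBA (A : Type) (Q : Type) where
  delta : Q → A → Q
  init : Q
  F : Set Q

namespace DBA

variable {A Q : Type}

/-- The transition function extended to finite words. -/
def deltaStar (M : DBA A Q) : Q → List A → Q
  | q, [] => q
  | q, a :: u => deltaStar M (M.delta q a) u

/-- The run of `M` on the infinite word `w`. -/
def run (M : DBA A Q) (w : ℕ → A) : ℕ → Q
  | 0 => M.init
  | n + 1 => M.delta (run M w n) (w n)

/-- `M` accepts `w` if some accepting state occurs infinitely often in the run. -/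
def Accepts (M : DBA A Q) (w : ℕ → A) : Prop :=
  ∃ q ∈ M.F, ∀ N : ℕ, ∃ n, N ≤ n ∧ run M w n = q

/-- The ω-language of `M`. -/
def Lang (M : DBA A Q) : Set (ℕ → A) := {w | M.Accepts w}

/-- `M` with initial state changed to `q`. -/
def start (M : DBA A Q) (q : Q) : DBA A Q := { M with init := q }

/-- `q'` is accessible from `q` (by a nonempty word). -/
def Reach (M : DBA A Q) (q q' : Q) : Prop :=
  ∃ u : List A, u ≠ [] ∧ deltaStar M q u = q'

/-- `M` is weak: `F` is a union of strongly connected components. -/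
def Weak (M : DBA A Q) : Prop :=
  ∀ q ∈ M.F, ∀ q', M.Reach q q' → M.Reach q' q → q' ∈ M.F

/-- `M` is minimal: distinct states recognize distinct languages. -/
def Minimal (M : DBA A Q) : Prop :=
  ∀ q q' : Q, q ≠ q' → (M.start q).Lang ≠ (M.start q').Lang

end DBA

/-- Concatenation of a finite word and an infinite word. -/
def cat {A : Type} (u : List A) (w : ℕ → A) : ℕ → A :=
  fun n => if h : n < u.length then u.get ⟨n, h⟩ else w (n - u.length)

/-- The value `⟨v⟩ = Σ_{i<|v|} v[i]·b^(|v|-1-i)` of a finite digit word. -/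
noncomputable def natVal (b : ℕ) (v : List (Fin b)) : ℝ :=
  ∑ i : Fin v.length, ((v.get i : ℕ) : ℝ) * (b : ℝ) ^ (v.length - 1 - (i : ℕ))

/-- The fractional value `⟨w⟩_f = Σ_{i≥0} w[i]·b^(-i-1)` of an infinite digit word. -/
noncomputable def fracVal (b : ℕ) (w : ℕ → Fin b) : ℝ :=
  ∑' i : ℕ, ((w i : ℕ) : ℝ) * (b : ℝ) ^ (-(i : ℤ) - 1)

/-- The word `𝐮⋆𝐰` over `Σ^d ∪ {⋆}`; `none` is the separator `⋆`. -/
def encWord {b d : ℕ} (u : List (Fin d → Fin b)) (w : ℕ → Fin d → Fin b) :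
    ℕ → Option (Fin d → Fin b) :=
  cat (u.map some ++ [none]) (fun n => some (w n))

/-- The vector of reals encoded by `𝐮⋆𝐰`. -/
noncomputable def vecVal {b d : ℕ} (u : List (Fin d → Fin b)) (w : ℕ → Fin d → Fin b) :
    Fin d → ℝ :=
  fun i => natVal b (u.map fun t => t i) + fracVal b (fun n => w n i)

/-- A language of words over `Σ^d ∪ {⋆}` is saturated if membership only depends on
the encoded vector of reals. -/
def Saturated {b d : ℕ} (L : Set (ℕ → Option (Fin d → Fin b))) : Prop :=
  ∀ (u : List (Fin d → Fin b)) (w : ℕ → Fin d → Fin b)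
    (u' : List (Fin d → Fin b)) (w' : ℕ → Fin d → Fin b),
    vecVal u w = vecVal u' w' → encWord u w ∈ L → encWord u' w' ∈ L

/-- The parallelization `par(𝒜)` of an automaton over `Σ ∪ {⋆}`. -/
def parDBA {Q : Type} {b : ℕ} (d : ℕ) (M : DBA (Option (Fin b)) Q) :
    DBA (Option (Fin d → Fin b)) Q where
  delta := fun q x =>
    match x with
    | none => M.delta q none
    | some t => M.deltaStar q (List.ofFn fun i => some (t i))
  init := M.init
  F := M.F

/-- Fill the `f`-th component of a tuple of `Σ^□_f` with the digit `z`. -/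
def fixTuple {b d : ℕ} (f : Fin d) (z : Fin b) (t : {i : Fin d // i ≠ f} → Fin b) :
    Fin d → Fin b :=
  fun i => if h : i = f then z else t ⟨i, h⟩

/-- The automaton `𝒜^{z@f}` over `Σ^□_f ∪ {⋆}`; a letter of `Σ^□_f` is represented by
its tuple of non-`f` components (the `f`-th component being `□`). -/
def fixDBA {Q : Type} {b d : ℕ} (M : DBA (Option (Fin d → Fin b)) Q) (f : Fin d) (z : Fin b) :
    DBA (Option ({i : Fin d // i ≠ f} → Fin b)) Q where
  delta := fun q x =>
    match x with
    | none => M.delta q none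
    | some t => M.delta q (some (fixTuple f z t))
  init := M.init
  F := M.F

/-- `fix_{□@f}(𝐰)`: replace the `f`-th component of every non-`⋆` letter by `□`. -/
def eraseComp {b d : ℕ} (f : Fin d) (w : ℕ → Option (Fin d → Fin b)) :
    ℕ → Option ({i : Fin d // i ≠ f} → Fin b) :=
  fun n => (w n).map fun t i => t i.val

/-- `fix_{z@f}(𝐰)`: replace the `f`-th component (`□`) of every non-`⋆` letter by `z`. -/
def fillComp {b d : ℕ} (f : Fin d) (z : Fin b) (w : ℕ → Option ({i : Fin d // i ≠ f} → Fin b)) :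
    ℕ → Option (Fin d → Fin b) :=
  fun n => (w n).map (fixTuple f z)

/-- The automaton `𝒜^{seq z}`, over alphabet `Σ ∪ {□,⋆}` (here `none` is `⋆` and
`some none` is `□`), with states `(Q × {0,…,d−1}) ∪ {⊥}` (`none` is `⊥`). -/
def seqDBA {Q : Type} {b : ℕ} (d : ℕ) (hd : 0 < d) (M : DBA (Option (Fin b)) Q) (z : Fin b) :
    DBA (Option (Option (Fin b))) (Option (Q × Fin d)) where
  delta := fun s x =>
    match s, x with
    | none, _ => none
    | some (q, i), none => some (M.delta q none, i)
    | some (q, i), some (some a) =>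
        if h : (i : ℕ) + 1 < d then some (M.delta q (some a), ⟨(i : ℕ) + 1, h⟩) else none
    | some (q, i), some none =>
        if (i : ℕ) = d - 1 then some (M.delta q (some z), ⟨0, hd⟩) else none
  init := some (M.init, ⟨0, hd⟩)
  F := {s | ∃ q ∈ M.F, ∃ i : Fin d, s = some (q, i)}

/-- Auxiliary function for flattening an infinite word of blocks:
`flatAux blk v n` is the pair (block index, offset inside the block) of position `n`. -/
def flatAux {A B : Type} (blk : A → List B) (v : ℕ → A) : ℕ → ℕ × ℕ
  | 0 => (0, 0)
  | n + 1 =>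
      let p := flatAux blk v n
      if p.2 + 1 < (blk (v p.1)).length then (p.1, p.2 + 1) else (p.1 + 1, 0)

/-- Flattening of an infinite word of (nonempty) blocks. -/
def flatten {A B : Type} [Inhabited B] (blk : A → List B) (v : ℕ → A) : ℕ → B :=
  fun n => (blk (v (flatAux blk v n).1)).getD (flatAux blk v n).2 default

/-- The block of a letter of `Σ^d ∪ {⋆}`: a `d`-tuple becomes its list of components,
`⋆` stays a single letter. -/
def parBlock {b d : ℕ} : Option (Fin d → Fin b) → List (Option (Fin b))
  | none => [none]
  | some t => List.ofFn fun i => some (t i)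

/-- `seq(𝐯)`: the sequentialization of an infinite word over `Σ^d ∪ {⋆}`. -/
def seqWord {b d : ℕ} (v : ℕ → Option (Fin d → Fin b)) : ℕ → Option (Fin b) :=
  flatten parBlock v

/-- The block of a letter of `Σ^□_f ∪ {⋆}`, as a word over `Σ ∪ {□,⋆}`. -/
def sqBlock {b d : ℕ} (f : Fin d) :
    Option ({i : Fin d // i ≠ f} → Fin b) → List (Option (Option (Fin b)))
  | none => [none]
  | some t => List.ofFn fun i : Fin d =>
      if h : i = f then some none else some (some (t ⟨i, h⟩))

/-- Number of non-`⋆` letters among the first `n` letters of `w`. -/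
def digitCount {b : ℕ} (w : ℕ → Option (Fin b)) : ℕ → ℕ
  | 0 => 0
  | n + 1 => digitCount w n + (if w n = none then 0 else 1)

section Anal
variable {b : ℕ} (hb : 2 ≤ b)

lemma zpow_eq_inv_pow (i : ℕ) : (b : ℝ) ^ (-(i : ℤ) - 1) = ((b : ℝ)⁻¹) ^ (i + 1) := by
  rw [inv_pow, ← zpow_natCast ((b:ℝ)) (i+1), ← zpow_neg]
  congr 1
  push_cast
  ring

include hb

lemma bR_pos : (0:ℝ) < (b:ℝ) := by positivity -- needs b>0
lemma binv_lt_one : (b:ℝ)⁻¹ < 1 := by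
  rw [inv_lt_one_iff₀]; right; exact_mod_cast by omega
lemma binv_nonneg : (0:ℝ) ≤ (b:ℝ)⁻¹ := by positivity

lemma summable_frac (s : ℕ → Fin b) :
    Summable (fun i => ((s i).val : ℝ) * (b : ℝ) ^ (-(i : ℤ) - 1)) := by
  have hgeom : Summable (fun i : ℕ => ((b:ℝ) - 1) * ((b:ℝ)⁻¹) ^ (i+1)) := by
    have := summable_geometric_of_lt_one (binv_nonneg hb) (binv_lt_one hb)
    simpa [pow_succ, mul_comm, mul_assoc, mul_left_comm] using ((this.mul_left ((b:ℝ)-1)).mul_right ((b:ℝ)⁻¹))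
  refine hgeom.of_nonneg_of_le (fun i => by positivity) (fun i => ?_)
  rw [zpow_eq_inv_pow]
  have h1 : ((s i).val : ℝ) ≤ (b:ℝ) - 1 := by
    have := (s i).isLt; have : ((s i : ℕ):ℝ) ≤ (b:ℝ) - 1 := by
      have hb1 : (1:ℝ) ≤ (b:ℝ) := by exact_mod_cast by omega
      have : (s i : ℕ) ≤ b - 1 := by omega
      calc ((s i : ℕ):ℝ) ≤ ((b-1 : ℕ):ℝ) := by exact_mod_cast this
        _ = (b:ℝ) - 1 := by push_cast [Nat.cast_sub (by omega : 1 ≤ b)]; ring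
    exact this
  exact mul_le_mul_of_nonneg_right h1 (by positivity)

lemma geom_tail : (∑' i : ℕ, ((b:ℝ) - 1) * ((b:ℝ)⁻¹) ^ (i + 1)) = 1 := by
  have h0 := binv_nonneg hb
  have h1 := binv_lt_one hb
  have hg := tsum_geometric_of_lt_one h0 h1
  have hsum : Summable (fun i : ℕ => ((b:ℝ)⁻¹) ^ i) := summable_geometric_of_lt_one h0 h1
  have : (∑' i : ℕ, ((b:ℝ) - 1) * ((b:ℝ)⁻¹) ^ (i + 1))
      = ((b:ℝ) - 1) * (b:ℝ)⁻¹ * ∑' i : ℕ, ((b:ℝ)⁻¹) ^ i := by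
    rw [← tsum_mul_left]
    congr 1; funext i; ring
  rw [this, hg]
  have hbne : (b:ℝ) ≠ 0 := ne_of_gt (bR_pos hb)
  have hbne1 : (b:ℝ) - 1 ≠ 0 := by
    have : (1:ℝ) < (b:ℝ) := by exact_mod_cast by omega
    linarith
  field_simp

end Anal

section Anal2
variable {b : ℕ} (hb : 2 ≤ b)
include hb

/-- Splitting lemma: value of integer+fractional parts via the merged digit sequence. -/
lemma natVal_add_fracVal (v : List (Fin b)) (w : ℕ → Fin b) :
    natVal b v + fracVal b w = (b : ℝ) ^ v.length * fracVal b (cat v w) := by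
  have hbne : (b:ℝ) ≠ 0 := ne_of_gt (bR_pos hb)
  set L := v.length with hL
  have hsum := summable_frac hb (cat v w)
  have hsplit := Summable.sum_add_tsum_nat_add (f := fun i => ((cat v w i).val : ℝ) * (b : ℝ) ^ (-(i : ℤ) - 1)) L hsum
  have : fracVal b (cat v w) = ∑ i ∈ Finset.range L, ((cat v w i).val : ℝ) * (b : ℝ) ^ (-(i : ℤ) - 1)
      + ∑' i : ℕ, ((cat v w (i + L)).val : ℝ) * (b : ℝ) ^ (-((i + L : ℕ) : ℤ) - 1) := by
    rw [fracVal, ← hsplit]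
  rw [this, mul_add]
  have h1 : (b:ℝ) ^ L * ∑ i ∈ Finset.range L, ((cat v w i).val : ℝ) * (b : ℝ) ^ (-(i : ℤ) - 1) = natVal b v := by
    rw [Finset.mul_sum, natVal]
    rw [show (∑ i : Fin v.length, ((v.get i).val : ℝ) * (b : ℝ) ^ (v.length - 1 - (i : ℕ)))
        = ∑ i : Fin v.length, (fun j : ℕ => (((cat v w j).val : ℝ)) * (b : ℝ) ^ (v.length - 1 - j)) (i : ℕ) from
      Finset.sum_congr rfl (fun i _ => by
        have : cat v w (i : ℕ) = v.get i := by simp [cat, i.isLt]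
        simp [this])]
    rw [Fin.sum_univ_eq_sum_range (fun j : ℕ => (((cat v w j).val : ℝ)) * (b : ℝ) ^ (v.length - 1 - j)) v.length]
    refine (Finset.sum_congr rfl (fun i hi => ?_)).symm
    have hi' : i < L := Finset.mem_range.mp hi
    rw [zpow_eq_inv_pow]
    have hexp : L - 1 - i = L - (i+1) := by omega
    rw [hexp, pow_sub₀ _ hbne (by omega), inv_pow]
    ring
  have h2 : (b:ℝ) ^ L * ∑' i : ℕ, ((cat v w (i + L)).val : ℝ) * (b : ℝ) ^ (-((i + L : ℕ) : ℤ) - 1) = fracVal b w := by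
    rw [← tsum_mul_left, fracVal]
    congr 1; funext i
    have hcat : cat v w (i + L) = w i := by simp [cat, hL]
    rw [hcat, zpow_eq_inv_pow, zpow_eq_inv_pow]
    have : ((b:ℝ)⁻¹) ^ (i + L + 1) = ((b:ℝ)⁻¹) ^ (i + 1) * ((b:ℝ)⁻¹) ^ L := by
      rw [← pow_add]; congr 1; omega
    rw [this, inv_pow, inv_pow]
    field_simp
  rw [h1, h2]

/-- The carry pattern relating two digit sequences. -/
def Carry (b : ℕ) (s s' : ℕ → Fin b) : Prop :=
  ∃ k, (∀ i < k, s i = s' i) ∧ ((s' k : ℕ) = (s k : ℕ) + 1) ∧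
    (∀ i, k < i → (s i : ℕ) = b - 1) ∧ (∀ i, k < i → (s' i : ℕ) = 0)

lemma geom_tail_shift (k : ℕ) :
    (∑' i : ℕ, ((b:ℝ) - 1) * ((b:ℝ)⁻¹) ^ (i + (k + 1) + 1)) = ((b:ℝ)⁻¹) ^ (k + 1) := by
  have : ∀ i : ℕ, ((b:ℝ) - 1) * ((b:ℝ)⁻¹) ^ (i + (k + 1) + 1)
      = (((b:ℝ) - 1) * ((b:ℝ)⁻¹) ^ (i + 1)) * ((b:ℝ)⁻¹) ^ (k + 1) := by
    intro i; rw [mul_assoc, ← pow_add]; ring_nf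
  simp_rw [this]
  rw [tsum_mul_right, geom_tail hb, one_mul]

lemma summable_geom_shift (k : ℕ) :
    Summable (fun i : ℕ => ((b:ℝ) - 1) * ((b:ℝ)⁻¹) ^ (i + (k + 1) + 1)) := by
  have h0 := binv_nonneg hb
  have h1 := binv_lt_one hb
  have := (summable_geometric_of_lt_one h0 h1).mul_left ((b:ℝ) - 1)
  refine this.of_nonneg_of_le (fun i => ?_) (fun i => ?_)
  · have h1 : (1:ℝ) ≤ (b:ℝ) := by exact_mod_cast by omega
    have h2 : (0:ℝ) ≤ (b:ℝ) - 1 := by linarith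
    exact mul_nonneg h2 (by positivity)
  · have : ((b:ℝ)⁻¹) ^ (i + (k+1) + 1) ≤ ((b:ℝ)⁻¹) ^ i :=
      pow_le_pow_of_le_one h0 (le_of_lt h1) (by omega)
    have hb1 : (0:ℝ) ≤ (b:ℝ) - 1 := by
      have : (1:ℝ) ≤ (b:ℝ) := by exact_mod_cast by omega
      linarith
    exact mul_le_mul_of_nonneg_left this hb1

lemma digit_le (a : Fin b) : ((a : ℕ) : ℝ) ≤ (b:ℝ) - 1 := by
  have h := a.isLt
  have : (a:ℕ) ≤ b - 1 := by omega
  calc ((a : ℕ):ℝ) ≤ ((b-1 : ℕ):ℝ) := by exact_mod_cast this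
    _ = (b:ℝ) - 1 := by push_cast [Nat.cast_sub (by omega : 1 ≤ b)]; ring

/-- Carry implies equal fractional values. -/
lemma fracVal_carry {s s' : ℕ → Fin b} (h : Carry b s s') : fracVal b s = fracVal b s' := by
  obtain ⟨k, hpre, hk, htail, htail'⟩ := h
  have hs := summable_frac hb s
  have hs' := summable_frac hb s'
  have hsplit := Summable.sum_add_tsum_nat_add (f := fun i => ((s i).val : ℝ) * (b : ℝ) ^ (-(i : ℤ) - 1)) (k+1) hs
  have hsplit' := Summable.sum_add_tsum_nat_add (f := fun i => ((s' i).val : ℝ) * (b : ℝ) ^ (-(i : ℤ) - 1)) (k+1) hs'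
  rw [fracVal, fracVal, ← hsplit, ← hsplit']
  have hT : (∑' i : ℕ, ((s (i + (k+1))).val : ℝ) * (b : ℝ) ^ (-((i + (k+1) : ℕ) : ℤ) - 1))
      = ((b:ℝ)⁻¹) ^ (k + 1) := by
    rw [← geom_tail_shift hb k]
    congr 1; funext i
    rw [zpow_eq_inv_pow]
    have : ((s (i + (k+1))).val : ℝ) = (b:ℝ) - 1 := by
      rw [htail _ (by omega)]
      push_cast [Nat.cast_sub (by omega : 1 ≤ b)]; ring
    rw [this]
  have hT' : (∑' i : ℕ, ((s' (i + (k+1))).val : ℝ) * (b : ℝ) ^ (-((i + (k+1) : ℕ) : ℤ) - 1)) = 0 := by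
    have : ∀ i : ℕ, ((s' (i + (k+1))).val : ℝ) * (b : ℝ) ^ (-((i + (k+1) : ℕ) : ℤ) - 1) = 0 := by
      intro i; rw [htail' _ (by omega)]; simp
    simp_rw [this]; exact tsum_zero
  rw [hT, hT']
  rw [Finset.sum_range_succ, Finset.sum_range_succ]
  have hpresum : ∑ i ∈ Finset.range k, ((s i).val : ℝ) * (b : ℝ) ^ (-(i : ℤ) - 1)
      = ∑ i ∈ Finset.range k, ((s' i).val : ℝ) * (b : ℝ) ^ (-(i : ℤ) - 1) := by
    refine Finset.sum_congr rfl (fun i hi => ?_)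
    rw [hpre i (Finset.mem_range.mp hi)]
  rw [hpresum]
  have : ((s' k).val : ℝ) = ((s k).val : ℝ) + 1 := by exact_mod_cast hk
  rw [this, zpow_eq_inv_pow]
  ring

end Anal2

section Anal3
variable {b : ℕ} (hb : 2 ≤ b)
include hb

lemma carry_of {s s' : ℕ → Fin b} (h : fracVal b s = fracVal b s') (k : ℕ)
    (hpre : ∀ i < k, s i = s' i) (hlt : (s k).val < (s' k).val) : Carry b s s' := by
  have hs := summable_frac hb s
  have hs' := summable_frac hb s'
  have hrpos : (0:ℝ) < ((b:ℝ)⁻¹) ^ (k+1) := by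
    have := bR_pos hb; positivity
  set T : ℝ := ∑' i : ℕ, ((s (i + (k+1))).val : ℝ) * (b : ℝ) ^ (-((i + (k+1) : ℕ) : ℤ) - 1) with hTdef
  set T' : ℝ := ∑' i : ℕ, ((s' (i + (k+1))).val : ℝ) * (b : ℝ) ^ (-((i + (k+1) : ℕ) : ℤ) - 1) with hT'def
  have hsumT : Summable (fun i : ℕ => ((s (i + (k+1))).val : ℝ) * (b : ℝ) ^ (-((i + (k+1) : ℕ) : ℤ) - 1)) := by
    exact (summable_nat_add_iff (f := fun i : ℕ => ((s i).val : ℝ) * (b : ℝ) ^ (-(i : ℤ) - 1)) (k+1)).2 hs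
  have hsumT' : Summable (fun i : ℕ => ((s' (i + (k+1))).val : ℝ) * (b : ℝ) ^ (-((i + (k+1) : ℕ) : ℤ) - 1)) := by
    exact (summable_nat_add_iff (f := fun i : ℕ => ((s' i).val : ℝ) * (b : ℝ) ^ (-(i : ℤ) - 1)) (k+1)).2 hs'
  have hgsum := summable_geom_shift hb k
  have htermle : ∀ i : ℕ, ((s (i + (k+1))).val : ℝ) * (b : ℝ) ^ (-((i + (k+1) : ℕ) : ℤ) - 1)
      ≤ ((b:ℝ) - 1) * ((b:ℝ)⁻¹) ^ (i + (k + 1) + 1) := by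
    intro i
    rw [zpow_eq_inv_pow]
    exact mul_le_mul_of_nonneg_right (digit_le hb _) (by positivity)
  have hTle : T ≤ ((b:ℝ)⁻¹) ^ (k+1) := by
    rw [hTdef, ← geom_tail_shift hb k]
    exact Summable.tsum_le_tsum htermle hsumT hgsum
  have hT'nn : 0 ≤ T' := tsum_nonneg (fun i => by positivity)
  -- main equation
  have hsplit := Summable.sum_add_tsum_nat_add (f := fun i => ((s i).val : ℝ) * (b : ℝ) ^ (-(i : ℤ) - 1)) (k+1) hs
  have hsplit' := Summable.sum_add_tsum_nat_add (f := fun i => ((s' i).val : ℝ) * (b : ℝ) ^ (-(i : ℤ) - 1)) (k+1) hs'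
  have hmain : ((s k).val : ℝ) * ((b:ℝ)⁻¹) ^ (k+1) + T = ((s' k).val : ℝ) * ((b:ℝ)⁻¹) ^ (k+1) + T' := by
    have h1 : fracVal b s = ∑ i ∈ Finset.range (k+1), ((s i).val : ℝ) * (b : ℝ) ^ (-(i : ℤ) - 1) + T := by
      rw [fracVal, ← hsplit]
    have h2 : fracVal b s' = ∑ i ∈ Finset.range (k+1), ((s' i).val : ℝ) * (b : ℝ) ^ (-(i : ℤ) - 1) + T' := by
      rw [fracVal, ← hsplit']
    have hpresum : ∑ i ∈ Finset.range k, ((s i).val : ℝ) * (b : ℝ) ^ (-(i : ℤ) - 1)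
        = ∑ i ∈ Finset.range k, ((s' i).val : ℝ) * (b : ℝ) ^ (-(i : ℤ) - 1) := by
      refine Finset.sum_congr rfl (fun i hi => ?_)
      rw [hpre i (Finset.mem_range.mp hi)]
    rw [h1, h2, Finset.sum_range_succ, Finset.sum_range_succ, hpresum, zpow_eq_inv_pow] at h
    linarith
  have hc1 : (1:ℝ) ≤ ((s' k).val : ℝ) - ((s k).val : ℝ) := by
    have : (s k).val + 1 ≤ (s' k).val := hlt
    have := (Nat.cast_le (α := ℝ)).2 this
    push_cast at this ⊢
    linarith
  -- derive T = r^{k+1}, T' = 0, difference = 1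
  have hDge : (1:ℝ) * ((b:ℝ)⁻¹) ^ (k+1) ≤ (((s' k).val : ℝ) - ((s k).val : ℝ)) * ((b:ℝ)⁻¹) ^ (k+1) :=
    mul_le_mul_of_nonneg_right hc1 hrpos.le
  rw [one_mul] at hDge
  have hTeq : T = ((b:ℝ)⁻¹) ^ (k+1) := by linarith [hmain, hTle, hT'nn, hDge]
  have hT'eq : T' = 0 := by linarith [hDge, hmain, hTle, hT'nn]
  have hceq : ((s' k).val : ℝ) = ((s k).val : ℝ) + 1 := by
    have hmul : (((s' k).val : ℝ) - ((s k).val : ℝ)) * ((b:ℝ)⁻¹) ^ (k+1) = 1 * ((b:ℝ)⁻¹) ^ (k+1) := by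
      rw [hTeq, hT'eq] at hmain
      ring_nf
      ring_nf at hmain
      linarith [hmain]
    have := mul_right_cancel₀ (ne_of_gt hrpos) hmul
    linarith
  refine ⟨k, hpre, by exact_mod_cast hceq, ?_, ?_⟩
  · -- s has (b-1)-tail
    intro i hi
    obtain ⟨j, rfl⟩ : ∃ j, i = j + (k+1) := ⟨i - (k+1), by omega⟩
    by_contra hne
    have hlt2 : ((s (j + (k+1))).val : ℝ) * (b : ℝ) ^ (-((j + (k+1) : ℕ) : ℤ) - 1)
        < ((b:ℝ) - 1) * ((b:ℝ)⁻¹) ^ (j + (k + 1) + 1) := by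
      rcases lt_or_eq_of_le (htermle j) with h' | h'
      · exact h'
      · exfalso
        rw [zpow_eq_inv_pow] at h'
        have hrp : (0:ℝ) < ((b:ℝ)⁻¹) ^ (j + (k+1) + 1) := by
          have := bR_pos hb; positivity
        have := mul_right_cancel₀ (ne_of_gt hrp) h'
        have hval : ((s (j + (k+1))).val : ℝ) = (((b - 1 : ℕ)):ℝ) := by
          rw [this]; push_cast [Nat.cast_sub (by omega : 1 ≤ b)]; ring
        exact hne (by exact_mod_cast hval)
    have := Summable.tsum_lt_tsum htermle hlt2 hsumT hgsum
    rw [← hTdef, geom_tail_shift hb k, hTeq] at this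
    exact lt_irrefl _ this
  · -- s' has 0-tail
    intro i hi
    obtain ⟨j, rfl⟩ : ∃ j, i = j + (k+1) := ⟨i - (k+1), by omega⟩
    have hle := Summable.le_tsum hsumT' j (fun m _ => by positivity)
    rw [← hT'def, hT'eq] at hle
    have hnn : (0:ℝ) ≤ ((s' (j + (k+1))).val : ℝ) * (b : ℝ) ^ (-((j + (k+1) : ℕ) : ℤ) - 1) := by positivity
    have heq0 : ((s' (j + (k+1))).val : ℝ) * (b : ℝ) ^ (-((j + (k+1) : ℕ) : ℤ) - 1) = 0 := le_antisymm hle hnn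
    have hrne : (b : ℝ) ^ (-((j + (k+1) : ℕ) : ℤ) - 1) ≠ 0 := by
      have := bR_pos hb
      exact ne_of_gt (zpow_pos this _)
    have := (mul_eq_zero.mp heq0).resolve_right hrne
    exact_mod_cast this

lemma fracVal_dichotomy {s s' : ℕ → Fin b} (h : fracVal b s = fracVal b s') :
    s = s' ∨ Carry b s s' ∨ Carry b s' s := by
  by_cases hss : s = s'
  · exact Or.inl hss
  right
  have hex : ∃ n, s n ≠ s' n := by
    by_contra hc
    push_neg at hc
    exact hss (funext hc)
  classical
  let k := Nat.find hex
  have hk : s k ≠ s' k := Nat.find_spec hex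
  have hpre : ∀ i < k, s i = s' i := fun i hi => by
    by_contra hc
    exact Nat.find_min hex hi hc
  rcases lt_trichotomy (s k).val (s' k).val with hlt | heq | hgt
  · exact Or.inl (carry_of hb h k hpre hlt)
  · exact absurd (Fin.ext heq) hk
  · exact Or.inr (carry_of hb h.symm k (fun i hi => (hpre i hi).symm) hgt)

end Anal3


section Auto
variable {A Q : Type}

lemma deltaStar_append (M : DBA A Q) (q : Q) (x y : List A) :
    M.deltaStar q (x ++ y) = M.deltaStar (M.deltaStar q x) y := by
  induction x generalizing q with
  | nil => simp [DBA.deltaStar]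
  | cons a x ih => simp [DBA.deltaStar, ih]

lemma cat_lt (x : List A) (w : ℕ → A) (n : ℕ) (h : n < x.length) :
    cat x w n = x.get ⟨n, h⟩ := by simp [cat, h]

lemma cat_ge (x : List A) (w : ℕ → A) (n : ℕ) (h : x.length ≤ n) :
    cat x w n = w (n - x.length) := by
  have : ¬ n < x.length := by omega
  simp [cat, this]

lemma run_take (M : DBA A Q) (x : List A) (w : ℕ → A) (k : ℕ) (hk : k ≤ x.length) :
    M.run (cat x w) k = M.deltaStar M.init (x.take k) := by
  induction k with
  | zero => simp [DBA.run, DBA.deltaStar]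
  | succ k ih =>
    have hk' : k ≤ x.length := by omega
    have hkl : k < x.length := by omega
    rw [DBA.run, ih hk', cat_lt x w k hkl]
    have htake : x.take (k+1) = x.take k ++ [x.get ⟨k, hkl⟩] := by
      rw [List.take_succ]
      congr 1
      simp [List.getElem?_eq_getElem hkl]
    rw [htake, deltaStar_append]
    simp [DBA.deltaStar]

lemma run_cat (M : DBA A Q) (x : List A) (w : ℕ → A) (n : ℕ) :
    M.run (cat x w) (x.length + n) = (M.start (M.deltaStar M.init x)).run w n := by
  induction n with
  | zero =>
    have := run_take M x w x.length le_rfl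
    simpa [DBA.run, DBA.start] using this
  | succ n ih =>
    have : x.length + (n + 1) = (x.length + n) + 1 := by omega
    rw [this, DBA.run, ih, cat_ge x w (x.length + n) (by omega)]
    have : x.length + n - x.length = n := by omega
    rw [this]
    rfl

lemma accepts_cat (M : DBA A Q) (x : List A) (w : ℕ → A) :
    M.Accepts (cat x w) ↔ (M.start (M.deltaStar M.init x)).Accepts w := by
  constructor
  · rintro ⟨q, hq, hinf⟩
    refine ⟨q, hq, fun N => ?_⟩
    obtain ⟨n, hn, hrun⟩ := hinf (x.length + N)
    refine ⟨n - x.length, by omega, ?_⟩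
    have he : x.length + (n - x.length) = n := by omega
    rw [← run_cat, he, hrun]
  · rintro ⟨q, hq, hinf⟩
    refine ⟨q, hq, fun N => ?_⟩
    obtain ⟨n, hn, hrun⟩ := hinf N
    exact ⟨x.length + n, by omega, by rw [run_cat, hrun]⟩

end Auto

section AutoFix
variable {Q : Type} {b d : ℕ}

lemma fix_run (M : DBA (Option (Fin d → Fin b)) Q) (f : Fin d) (z : Fin b) (q : Q)
    (y : ℕ → Option ({i : Fin d // i ≠ f} → Fin b)) (n : ℕ) :
    ((fixDBA M f z).start q).run y n = (M.start q).run (fillComp f z y) n := by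
  induction n with
  | zero => rfl
  | succ n ih =>
    rw [DBA.run, DBA.run, ih]
    cases hy : y n <;> simp [DBA.start, fixDBA, fillComp, hy]

lemma fix_accepts (M : DBA (Option (Fin d → Fin b)) Q) (f : Fin d) (z : Fin b) (q : Q)
    (y : ℕ → Option ({i : Fin d // i ≠ f} → Fin b)) :
    ((fixDBA M f z).start q).Accepts y ↔ (M.start q).Accepts (fillComp f z y) := by
  unfold DBA.Accepts
  simp only [fix_run]
  rfl

lemma fix_lang_iff (M : DBA (Option (Fin d → Fin b)) Q) (f : Fin d) (z : Fin b)
    (x : List (Option (Fin d → Fin b))) (a : Fin d → Fin b)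
    (y : ℕ → Option ({i : Fin d // i ≠ f} → Fin b)) :
    y ∈ ((fixDBA M f z).start (M.delta (M.deltaStar M.init x) (some a))).Lang
      ↔ M.Accepts (cat (x ++ [some a]) (fillComp f z y)) := by
  rw [accepts_cat, deltaStar_append]
  have : M.deltaStar (M.deltaStar M.init x) [some a] = M.delta (M.deltaStar M.init x) (some a) := rfl
  rw [this]
  exact (fix_accepts M f z _ y)

end AutoFix


section Words
variable {b d : ℕ}

lemma encWord_apply (u : List (Fin d → Fin b)) (w : ℕ → Fin d → Fin b) (n : ℕ) :
    encWord u w n = if h : n < u.length then some (u.get ⟨n, h⟩)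
      else if n = u.length then none else some (w (n - u.length - 1)) := by
  unfold encWord
  by_cases h1 : n < u.length
  · rw [cat_lt _ _ n (by simp; omega)]
    simp only [h1, dif_pos]
    have : n < (u.map some).length := by simp [h1]
    rw [List.get_eq_getElem, List.getElem_append_left this]
    simp [h1]
  · by_cases h2 : n = u.length
    · subst h2
      rw [cat_lt _ _ _ (by simp)]
      rw [dif_neg h1, if_pos rfl]
      rw [List.get_eq_getElem, List.getElem_append_right (by simp)]
      simp
    · have h3 : (u.map some ++ [none]).length ≤ n := by
        simp only [List.length_append, List.length_map, List.length_cons, List.length_nil]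
        omega
      rw [cat_ge _ _ n h3]
      rw [dif_neg h1, if_neg h2]
      have hlen : (u.map some ++ [none]).length = u.length + 1 := by simp
      rw [hlen]
      have harith : n - (u.length + 1) = n - u.length - 1 := by omega
      rw [harith]

lemma encWord_none_iff (u : List (Fin d → Fin b)) (w : ℕ → Fin d → Fin b) (n : ℕ) :
    encWord u w n = none ↔ n = u.length := by
  rw [encWord_apply]
  split_ifs with h1 h2 <;> simp <;> omega

/-- The digit sequence of coordinate `f` of `𝐮⋆𝐰`. -/
def dseq (u : List (Fin d → Fin b)) (w : ℕ → Fin d → Fin b) (f : Fin d) : ℕ → Fin b :=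
  cat (u.map fun t => t f) (fun n => w n f)

lemma dseq_apply (u : List (Fin d → Fin b)) (w : ℕ → Fin d → Fin b) (f : Fin d) (k : ℕ) :
    dseq u w f k = if h : k < u.length then u.get ⟨k, h⟩ f else w (k - u.length) f := by
  unfold dseq
  by_cases h : k < u.length
  · rw [cat_lt _ _ k (by simpa using h)]
    simp [h]
  · rw [cat_ge _ _ k (by simpa using not_lt.mp h)]
    simp [h]

/-- Word position of digit index `k` when the separator sits at position `m`. -/
def posOf (m k : ℕ) : ℕ := if k < m then k else k + 1

lemma posOf_ne (m k : ℕ) : posOf m k ≠ m := by unfold posOf; split <;> omega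

lemma encWord_posOf (u : List (Fin d → Fin b)) (w : ℕ → Fin d → Fin b) (k : ℕ) :
    encWord u w (posOf u.length k) = some (fun i => dseq u w i k) := by
  unfold posOf
  split_ifs with h
  · rw [encWord_apply]
    simp only [h, dif_pos]
    congr 1
    funext i
    rw [dseq_apply]
    simp [h]
  · rw [encWord_apply]
    have h1 : ¬ (k + 1 < u.length) := by omega
    have h2 : ¬ (k + 1 = u.length) := by omega
    rw [dif_neg h1, if_neg h2]
    congr 1
    funext i
    rw [dseq_apply]
    have h3 : ¬ (k < u.length) := h
    simp only [h3, dif_neg]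
    congr 1
    omega

/-- Decomposition of a word with a unique `none` at position `m`. -/
lemma exists_encWord (V : ℕ → Option (Fin d → Fin b)) (m : ℕ)
    (h : ∀ n, V n = none ↔ n = m) :
    ∃ u w, u.length = m ∧ V = encWord u w := by
  have hsome : ∀ n, n ≠ m → (V n).isSome := by
    intro n hn
    rcases ho : V n with _ | t
    · exact absurd ((h n).mp ho) hn
    · rfl
  refine ⟨List.ofFn (fun i : Fin m => (V i).get (hsome i (by omega))),
    fun n => (V (m + 1 + n)).get (hsome _ (by omega)), by simp, ?_⟩
  funext n
  rw [encWord_apply]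
  simp only [List.length_ofFn]
  split_ifs with h1 h2
  · rw [List.get_ofFn]
    simp
  · rw [h2, (h m).mpr rfl]
  · simp only [Option.some_get]
    congr 1
    omega

lemma cat_ofFn_shift {T : Type} (Aw : ℕ → T) (p : ℕ) :
    cat (List.ofFn fun i : Fin p => Aw i) (fun n => Aw (p + n)) = Aw := by
  funext n
  by_cases h : n < p
  · rw [cat_lt _ _ n (by simpa using h)]
    rw [List.get_ofFn]
    simp
  · rw [cat_ge _ _ n (by simpa using not_lt.mp h)]
    simp only [List.length_ofFn]
    congr 1
    omega

lemma ofFn_nat_succ {T : Type} (g : ℕ → T) (p : ℕ) :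
    List.ofFn (fun i : Fin (p+1) => g i) = (List.ofFn fun i : Fin p => g i) ++ [g p] := by
  rw [List.ofFn_succ']
  simp [List.concat_eq_append]

lemma natVal_cons (a : Fin b) (v : List (Fin b)) :
    natVal b (a :: v) = (a.val : ℝ) * (b : ℝ) ^ v.length + natVal b v := by
  unfold natVal
  show (∑ i : Fin (v.length + 1), (((a :: v).get i).val : ℝ) * (b : ℝ) ^ ((v.length + 1) - 1 - (i : ℕ)))
      = (a.val : ℝ) * (b : ℝ) ^ v.length + natVal b v
  rw [Fin.sum_univ_succ]
  have hsum : ∀ i : Fin v.length, (((a :: v).get i.succ).val : ℝ) * (b : ℝ) ^ ((v.length + 1) - 1 - ((i.succ : ℕ)))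
      = ((v.get i).val : ℝ) * (b : ℝ) ^ (v.length - 1 - (i : ℕ)) := fun i => by
    rw [show (a :: v).get i.succ = v.get i from rfl]
    have he : (v.length + 1) - 1 - ((i.succ : ℕ)) = v.length - 1 - (i : ℕ) := by
      simp only [Fin.val_succ]
      omega
    rw [he]
  rw [Finset.sum_congr rfl (fun i _ => hsum i), ← natVal]
  simp

end Words

lemma fin_aux_sub {b : ℕ} (hb : 2 ≤ b) : b - 1 < b := by omega

lemma fin_aux_zero {b : ℕ} (hb : 2 ≤ b) : 0 < b := by omega

lemma fin_aux_succ {b d : ℕ} (hb : 2 ≤ b) (a : Fin d → Fin b) (f : Fin d) (ha : (a f : ℕ) ≤ b - 2) :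
    (a f : ℕ) + 1 < b := by omega

section Step
variable {Q : Type} {b d : ℕ}

lemma vecVal_coord (hb : 2 ≤ b) (u : List (Fin d → Fin b)) (w : ℕ → Fin d → Fin b) (f : Fin d) :
    vecVal u w f = (b : ℝ) ^ u.length * fracVal b (dseq u w f) := by
  show natVal b (u.map fun t => t f) + fracVal b (fun n => w n f) = _
  rw [natVal_add_fracVal hb, List.length_map]
  rfl

lemma fracVal_dseq_eq (hb : 2 ≤ b) {u u' : List (Fin d → Fin b)} {w w' : ℕ → Fin d → Fin b}
    (hlen : u'.length = u.length) (h : vecVal u w = vecVal u' w') (f : Fin d) :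
    fracVal b (dseq u w f) = fracVal b (dseq u' w' f) := by
  have h1 := congrFun h f
  rw [vecVal_coord hb u w f, vecVal_coord hb u' w' f, hlen] at h1
  have hbne : ((b:ℝ)) ^ u.length ≠ 0 := pow_ne_zero _ (ne_of_gt (bR_pos hb))
  exact mul_left_cancel₀ hbne h1

lemma vecVal_eq_of_dseq (hb : 2 ≤ b) {u u' : List (Fin d → Fin b)} {w w' : ℕ → Fin d → Fin b}
    (hlen : u'.length = u.length)
    (h : ∀ f, fracVal b (dseq u w f) = fracVal b (dseq u' w' f)) :
    vecVal u w = vecVal u' w' := by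
  funext f
  rw [vecVal_coord hb u w f, vecVal_coord hb u' w' f, hlen, h f]

lemma step_transfer (hb : 2 ≤ b) (M : DBA (Option (Fin d → Fin b)) Q)
    (H : ∀ (f : Fin d) (x : List (Option (Fin d → Fin b))) (a : Fin d → Fin b)
        (ha : (a f : ℕ) ≤ b - 2),
        ((fixDBA M f (⟨b - 1, fin_aux_sub hb⟩ : Fin b)).start
            (M.delta (M.deltaStar M.init x) (some a))).Lang =
        ((fixDBA M f (⟨0, fin_aux_zero hb⟩ : Fin b)).start
            (M.delta (M.deltaStar M.init x)
              (some fun i => if i = f then (⟨(a f : ℕ) + 1, fin_aux_succ hb a f ha⟩ : Fin b) else a i))).Lang)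
    (f : Fin d) (u : List (Fin d → Fin b)) (w : ℕ → Fin d → Fin b)
    (u' : List (Fin d → Fin b)) (w' : ℕ → Fin d → Fin b)
    (hlen : u'.length = u.length)
    (hoff : ∀ i, i ≠ f → dseq u w i = dseq u' w' i)
    (hcar : Carry b (dseq u w f) (dseq u' w' f)) :
    encWord u w ∈ M.Lang ↔ encWord u' w' ∈ M.Lang := by
  obtain ⟨k, hpre, hk, htail, htail'⟩ := hcar
  have hd : 0 < d := f.pos
  set m := u.length with hm
  set p := posOf m k with hpdef
  have hp : p = if k < m then k else k + 1 := rfl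
  have hpm : p ≠ m := posOf_ne m k
  -- the letters at position p
  have hA1p : encWord u w p = some (fun i => dseq u w i k) := encWord_posOf u w k
  have hA2p : encWord u' w' p = some (fun i => dseq u' w' i k) := by
    have := encWord_posOf u' w' k
    rw [hlen] at this
    exact this
  set a : Fin d → Fin b := fun i => dseq u w i k with hadef
  have hafle : (a f).val ≤ b - 2 := by
    have h1 : (dseq u' w' f k).val = (a f).val + 1 := hk
    have h2 := (dseq u' w' f k).isLt
    omega
  set a' : Fin d → Fin b :=
    fun i => if i = f then (⟨(a f : ℕ) + 1, by omega⟩ : Fin b) else a i with ha'def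
  have ha2 : (fun i => dseq u' w' i k) = a' := by
    funext i
    by_cases hif : i = f
    · subst hif
      apply Fin.ext
      rw [ha'def]
      simp only [if_pos rfl]
      exact hk
    · rw [ha'def]
      simp only [if_neg hif]
      exact (congrFun (hoff i hif) k).symm
  -- prefix agreement
  have hagree : ∀ n, n < p → encWord u w n = encWord u' w' n := by
    intro n hn
    by_cases hnm : n = m
    · have e1 : encWord u w m = none := (encWord_none_iff u w m).mpr hm
      have e2 : encWord u' w' m = none := (encWord_none_iff u' w' m).mpr hlen.symm
      rw [hnm, e1, e2]
    · have hpos : posOf m (if n < m then n else n - 1) = n := by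
        unfold posOf
        split_ifs <;> omega
      have hjk : (if n < m then n else n - 1) < k := by
        rw [hp] at hn
        split_ifs at hn ⊢ <;> omega
      rw [← hpos, encWord_posOf]
      have h2 := encWord_posOf u' w' (if n < m then n else n - 1)
      rw [hlen] at h2
      rw [h2]
      congr 1
      funext i
      by_cases hif : i = f
      · subst hif
        exact hpre _ hjk
      · exact congrFun (hoff i hif) _
  set x := List.ofFn (fun i : Fin p => encWord u w i) with hxdef
  -- digit indices of tail positions
  have hidx : ∀ q', q' ≠ m → p < q' → ∃ j, k < j ∧ posOf m j = q' := by
    intro q' h1 h2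
    refine ⟨if q' < m then q' else q' - 1, ?_, ?_⟩
    · rw [hp] at h2
      split_ifs at h2 ⊢ <;> omega
    · unfold posOf
      rw [hp] at h2
      split_ifs at h2 ⊢ <;> omega
  set y : ℕ → Option ({i : Fin d // i ≠ f} → Fin b) :=
    eraseComp f (fun n => encWord u w (p + 1 + n)) with hydef
  have claim1 : fillComp f (⟨b - 1, by omega⟩ : Fin b) y = fun n => encWord u w (p + 1 + n) := by
    funext n
    by_cases hq : p + 1 + n = m
    · have e1 : encWord u w (p + 1 + n) = none := (encWord_none_iff u w _).mpr (hq.trans hm)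
      rw [hydef]
      simp [fillComp, eraseComp, e1]
    · obtain ⟨j, hj, hpj⟩ := hidx (p + 1 + n) hq (by omega)
      have e1 : encWord u w (p + 1 + n) = some (fun i => dseq u w i j) := by
        rw [← hpj]; exact encWord_posOf u w j
      rw [hydef]
      simp only [fillComp, eraseComp, e1, Option.map_some]
      congr 1
      funext i
      unfold fixTuple
      by_cases hif : i = f
      · subst hif
        simp only [dif_pos rfl]
        apply Fin.ext
        exact (htail j hj).symm
      · simp only [dif_neg hif]
  have claim2 : fillComp f (⟨0, by omega⟩ : Fin b) y = fun n => encWord u' w' (p + 1 + n) := by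
    funext n
    by_cases hq : p + 1 + n = m
    · have e1 : encWord u w (p + 1 + n) = none := (encWord_none_iff u w _).mpr (hq.trans hm)
      have e2 : encWord u' w' (p + 1 + n) = none :=
        (encWord_none_iff u' w' _).mpr (hq.trans hlen.symm)
      rw [hydef]
      simp [fillComp, eraseComp, e1, e2]
    · obtain ⟨j, hj, hpj⟩ := hidx (p + 1 + n) hq (by omega)
      have e1 : encWord u w (p + 1 + n) = some (fun i => dseq u w i j) := by
        rw [← hpj]; exact encWord_posOf u w j
      have e2 : encWord u' w' (p + 1 + n) = some (fun i => dseq u' w' i j) := by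
        have := encWord_posOf u' w' j
        rw [hlen] at this
        rw [← hpj]; exact this
      rw [hydef]
      simp only [fillComp, eraseComp, e1, e2, Option.map_some]
      congr 1
      funext i
      unfold fixTuple
      by_cases hif : i = f
      · subst hif
        simp only [dif_pos rfl]
        apply Fin.ext
        exact (htail' j hj).symm
      · simp only [dif_neg hif]
        exact congrFun (hoff i hif) j
  -- the decompositions
  have hdec1 : encWord u w = cat (x ++ [some a]) (fillComp f (⟨b - 1, by omega⟩ : Fin b) y) := by
    rw [claim1]
    have hx1 : x ++ [some a] = List.ofFn (fun i : Fin (p + 1) => encWord u w i) := by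
      rw [ofFn_nat_succ (fun n => encWord u w n) p, hA1p, hxdef]
    rw [hx1, cat_ofFn_shift (encWord u w) (p + 1)]
  have hdec2 : encWord u' w' = cat (x ++ [some a']) (fillComp f (⟨0, by omega⟩ : Fin b) y) := by
    rw [claim2]
    have hx0 : x = List.ofFn (fun i : Fin p => encWord u' w' i) := by
      rw [hxdef]
      exact congrArg List.ofFn (funext fun i => hagree i i.isLt)
    have hx1 : x ++ [some a'] = List.ofFn (fun i : Fin (p + 1) => encWord u' w' i) := by
      rw [ofFn_nat_succ (fun n => encWord u' w' n) p, hA2p, ha2, hx0]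
    rw [hx1, cat_ofFn_shift (encWord u' w') (p + 1)]
  -- transfer
  have e1 := fix_lang_iff M f (⟨b - 1, by omega⟩ : Fin b) x a y
  rw [← hdec1] at e1
  have e2 := fix_lang_iff M f (⟨0, by omega⟩ : Fin b) x a' y
  rw [← hdec2] at e2
  have hH := H f x a hafle
  constructor
  · intro h
    have h1 : M.Accepts (encWord u w) := h
    have h2 := e1.mpr h1
    rw [hH] at h2
    exact e2.mp h2
  · intro h
    have h1 : M.Accepts (encWord u' w') := h
    have h2 := e2.mpr h1
    rw [← hH] at h2
    exact e1.mp h2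

end Step

section Fwd
variable {Q : Type} {b d : ℕ}

lemma cat_append_get_left {T : Type} (x : List T) (t : T) (s : ℕ → T) (n : ℕ) (h : n < x.length) :
    cat (x ++ [t]) s n = x.get ⟨n, h⟩ := by
  rw [cat_lt _ _ n (by simp; omega)]
  rw [List.get_eq_getElem, List.getElem_append_left h]
  rfl

lemma cat_append_get_mid {T : Type} (x : List T) (t : T) (s : ℕ → T) :
    cat (x ++ [t]) s x.length = t := by
  rw [cat_lt _ _ x.length (by simp)]
  rw [List.get_eq_getElem, List.getElem_append_right (le_refl x.length)]
  simp

lemma cat_append_get_right {T : Type} (x : List T) (t : T) (s : ℕ → T) (n : ℕ) (h : x.length < n) :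
    cat (x ++ [t]) s n = s (n - x.length - 1) := by
  rw [cat_ge _ _ n (by simp; omega)]
  congr 1
  simp
  omega

/-- Relation between corresponding letters of the two compared words. -/
lemma W1W2_rel (hb : 2 ≤ b) (f : Fin d) (x : List (Option (Fin d → Fin b)))
    (a : Fin d → Fin b) (ha : (a f : ℕ) ≤ b - 2)
    (y : ℕ → Option ({i : Fin d // i ≠ f} → Fin b)) (n : ℕ) :
    (cat (x ++ [some a]) (fillComp f (⟨b - 1, fin_aux_sub hb⟩ : Fin b) y) n = none ∧
     cat (x ++ [some (fun i => if i = f then (⟨(a f : ℕ) + 1, fin_aux_succ hb a f ha⟩ : Fin b) else a i)])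
        (fillComp f (⟨0, fin_aux_zero hb⟩ : Fin b) y) n = none) ∨
    (∃ t t', cat (x ++ [some a]) (fillComp f (⟨b - 1, fin_aux_sub hb⟩ : Fin b) y) n = some t ∧
     cat (x ++ [some (fun i => if i = f then (⟨(a f : ℕ) + 1, fin_aux_succ hb a f ha⟩ : Fin b) else a i)])
        (fillComp f (⟨0, fin_aux_zero hb⟩ : Fin b) y) n = some t' ∧
     (∀ i, i ≠ f → t i = t' i) ∧
     (n < x.length → t f = t' f) ∧
     (n = x.length → (t' f).val = (t f).val + 1) ∧
     (x.length < n → (t f).val = b - 1 ∧ (t' f).val = 0)) := by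
  rcases lt_trichotomy n x.length with h | h | h
  · rcases hx : x.get ⟨n, h⟩ with _ | t
    · left
      rw [cat_append_get_left x _ _ n h, cat_append_get_left x _ _ n h, hx]
      exact ⟨rfl, rfl⟩
    · right
      refine ⟨t, t, ?_, ?_, fun i _ => rfl, fun _ => rfl, by omega, by omega⟩
      · rw [cat_append_get_left x _ _ n h, hx]
      · rw [cat_append_get_left x _ _ n h, hx]
  · right
    subst h
    refine ⟨a, _, cat_append_get_mid x _ _, cat_append_get_mid x _ _, ?_, by omega, ?_, by omega⟩
    · intro i hi
      simp [hi]
    · intro _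
      simp
  · rcases hy : y (n - x.length - 1) with _ | t0
    · left
      rw [cat_append_get_right x _ _ n h, cat_append_get_right x _ _ n h]
      simp [fillComp, hy]
    · right
      refine ⟨fixTuple f (⟨b - 1, by omega⟩ : Fin b) t0, fixTuple f (⟨0, by omega⟩ : Fin b) t0,
        ?_, ?_, ?_, by omega, by omega, ?_⟩
      · rw [cat_append_get_right x _ _ n h]
        simp [fillComp, hy]
      · rw [cat_append_get_right x _ _ n h]
        simp [fillComp, hy]
      · intro i hi
        simp [fixTuple, hi]
      · intro _
        constructor <;> simp [fixTuple]

lemma W1W2_vecVal (hb : 2 ≤ b) (f : Fin d) (x : List (Option (Fin d → Fin b)))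
    (a : Fin d → Fin b) (ha : (a f : ℕ) ≤ b - 2)
    (y : ℕ → Option ({i : Fin d // i ≠ f} → Fin b))
    {u u' : List (Fin d → Fin b)} {w w' : ℕ → Fin d → Fin b}
    (h1 : cat (x ++ [some a]) (fillComp f (⟨b - 1, fin_aux_sub hb⟩ : Fin b) y) = encWord u w)
    (h2 : cat (x ++ [some (fun i => if i = f then (⟨(a f : ℕ) + 1, fin_aux_succ hb a f ha⟩ : Fin b) else a i)])
        (fillComp f (⟨0, fin_aux_zero hb⟩ : Fin b) y) = encWord u' w')
    (hlen : u'.length = u.length) :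
    vecVal u w = vecVal u' w' := by
  set m := u.length with hm
  set p := x.length with hpx
  -- p ≠ m
  have hWm : encWord u w m = none := (encWord_none_iff u w m).mpr rfl
  have hWp : encWord u w p = some a := by
    rw [← h1]; exact cat_append_get_mid x _ _
  have hpm : p ≠ m := by
    intro h
    rw [h, hWm] at hWp
    simp at hWp
  -- digitwise relation
  have REL : ∀ j, (∀ i, i ≠ f → dseq u w i j = dseq u' w' i j) ∧
      (posOf m j < p → dseq u w f j = dseq u' w' f j) ∧
      (posOf m j = p → (dseq u' w' f j).val = (dseq u w f j).val + 1) ∧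
      (p < posOf m j → (dseq u w f j).val = b - 1 ∧ (dseq u' w' f j).val = 0) := by
    intro j
    have e1 : encWord u w (posOf m j) = some (fun i => dseq u w i j) := encWord_posOf u w j
    have e2 : encWord u' w' (posOf m j) = some (fun i => dseq u' w' i j) := by
      have := encWord_posOf u' w' j
      rw [hlen] at this
      exact this
    rcases W1W2_rel hb f x a ha y (posOf m j) with ⟨hn1, _⟩ | ⟨t, t', ht1, ht2, hoff, hlt, heq, hgt⟩
    · rw [h1, e1] at hn1
      simp at hn1
    · rw [h1, e1] at ht1
      rw [h2, e2] at ht2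
      have ht1' : t = fun i => dseq u w i j := (Option.some.inj ht1).symm
      have ht2' : t' = fun i => dseq u' w' i j := (Option.some.inj ht2).symm
      subst ht1' ht2'
      exact ⟨hoff, hlt, heq, hgt⟩
  -- conclude
  refine vecVal_eq_of_dseq hb hlen (fun i => ?_)
  by_cases hif : i = f
  · subst hif
    set k := if p < m then p else p - 1 with hk
    have hpk : posOf m k = p := by
      unfold posOf
      rw [hk]
      split_ifs <;> omega
    have hlt : ∀ j, j < k → posOf m j < p := by
      intro j hj
      unfold posOf
      rw [hk] at hj
      split_ifs at hj ⊢ <;> omega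
    have hgt : ∀ j, k < j → p < posOf m j := by
      intro j hj
      unfold posOf
      rw [hk] at hj
      split_ifs at hj ⊢ <;> omega
    refine fracVal_carry hb ⟨k, ?_, ?_, ?_, ?_⟩
    · exact fun j hj => (REL j).2.1 (hlt j hj)
    · exact (REL k).2.2.1 hpk
    · exact fun j hj => ((REL j).2.2.2 (hgt j hj)).1
    · exact fun j hj => ((REL j).2.2.2 (hgt j hj)).2
  · rw [show dseq u w i = dseq u' w' i from funext fun j => (REL j).1 i hif]

end Fwd

section Pad
variable {Q : Type} {b d : ℕ}

lemma sat_step (hb : 2 ≤ b) (M : DBA (Option (Fin d → Fin b)) Q)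
    (hshape : ∀ x ∈ M.Lang, ∃ u w, x = encWord u w) (hsat : Saturated M.Lang)
    (f : Fin d) (x : List (Option (Fin d → Fin b))) (a : Fin d → Fin b)
    (ha : (a f : ℕ) ≤ b - 2) (y : ℕ → Option ({i : Fin d // i ≠ f} → Fin b)) :
    M.Accepts (cat (x ++ [some a]) (fillComp f (⟨b - 1, fin_aux_sub hb⟩ : Fin b) y)) ↔
    M.Accepts (cat (x ++ [some (fun i => if i = f then (⟨(a f : ℕ) + 1, fin_aux_succ hb a f ha⟩ : Fin b) else a i)])
        (fillComp f (⟨0, fin_aux_zero hb⟩ : Fin b) y)) := by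
  set W1 := cat (x ++ [some a]) (fillComp f (⟨b - 1, by omega⟩ : Fin b) y) with hW1d
  set W2 := cat (x ++ [some (fun i => if i = f then (⟨(a f : ℕ) + 1, by omega⟩ : Fin b) else a i)])
      (fillComp f (⟨0, by omega⟩ : Fin b) y) with hW2d
  have nonepos : ∀ n, (W1 n = none ↔ W2 n = none) := by
    intro n
    rcases W1W2_rel hb f x a ha y n with ⟨e1, e2⟩ | ⟨t, t', e1, e2, _⟩
    · rw [← hW1d] at e1; rw [← hW2d] at e2
      simp [e1, e2]
    · rw [← hW1d] at e1; rw [← hW2d] at e2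
      simp [e1, e2]
  constructor
  · intro h
    obtain ⟨u, w, hW1⟩ := hshape W1 h
    have hnone2 : ∀ n, W2 n = none ↔ n = u.length := by
      intro n
      have h3 := encWord_none_iff u w n
      rw [← hW1] at h3
      exact (nonepos n).symm.trans h3
    obtain ⟨u', w', hlen', hW2⟩ := exists_encWord W2 u.length hnone2
    have hvec := W1W2_vecVal hb f x a ha y hW1 hW2 hlen'
    have hm1 : encWord u w ∈ M.Lang := by rw [← hW1]; exact h
    have := hsat u w u' w' hvec hm1
    rw [← hW2] at this
    exact this
  · intro h
    obtain ⟨u', w', hW2⟩ := hshape W2 h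
    have hnone1 : ∀ n, W1 n = none ↔ n = u'.length := by
      intro n
      have h3 := encWord_none_iff u' w' n
      rw [← hW2] at h3
      exact (nonepos n).trans h3
    obtain ⟨u, w, hlen, hW1⟩ := exists_encWord W1 u'.length hnone1
    have hvec := W1W2_vecVal hb f x a ha y hW1 hW2 hlen.symm
    have hm2 : encWord u' w' ∈ M.Lang := by rw [← hW2]; exact h
    have := hsat u' w' u w hvec.symm hm2
    rw [← hW1] at this
    exact this

lemma encWord_cons_eq (t : Fin d → Fin b) (u : List (Fin d → Fin b)) (w : ℕ → Fin d → Fin b) :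
    encWord (t :: u) w = cat [some t] (encWord u w) := by
  funext n
  cases n with
  | zero =>
    rw [cat_lt _ _ 0 (by simp), encWord_apply]
    simp
  | succ n =>
    rw [cat_ge _ _ (n+1) (by simp)]
    rw [show n + 1 - ([some t] : List (Option (Fin d → Fin b))).length = n from rfl]
    rw [encWord_apply, encWord_apply]
    by_cases h1 : n < u.length
    · rw [dif_pos h1, dif_pos (show n + 1 < (t :: u).length by simp; omega)]
      rfl
    · by_cases h2 : n = u.length
      · rw [dif_neg h1, dif_neg (show ¬ (n + 1 < (t :: u).length) by simp; omega)]
        rw [if_pos h2, if_pos (by simp; omega)]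
      · rw [dif_neg h1, dif_neg (show ¬ (n + 1 < (t :: u).length) by simp; omega)]
        rw [if_neg h2, if_neg (by simp; omega)]
        congr 1
        simp only [List.length_cons]
        show w (n + 1 - (u.length + 1) - 1) = w (n - u.length - 1)
        rw [show n + 1 - (u.length + 1) - 1 = n - u.length - 1 by omega]

lemma mem_cons_zero (M : DBA (Option (Fin d → Fin b)) Q) (z0 : Fin d → Fin b)
    (hinit : M.delta M.init (some z0) = M.init) (u : List (Fin d → Fin b))
    (w : ℕ → Fin d → Fin b) :
    encWord (z0 :: u) w ∈ M.Lang ↔ encWord u w ∈ M.Lang := by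
  show M.Accepts _ ↔ M.Accepts _
  rw [encWord_cons_eq, accepts_cat]
  have h1 : M.deltaStar M.init [some z0] = M.init := by
    simp [DBA.deltaStar, hinit]
  rw [h1]
  have h2 : M.start M.init = M := rfl
  rw [h2]

lemma mem_pad (M : DBA (Option (Fin d → Fin b)) Q) (z0 : Fin d → Fin b)
    (hinit : M.delta M.init (some z0) = M.init) (k : ℕ) (u : List (Fin d → Fin b))
    (w : ℕ → Fin d → Fin b) :
    encWord (List.replicate k z0 ++ u) w ∈ M.Lang ↔ encWord u w ∈ M.Lang := by
  induction k with
  | zero => rw [List.replicate_zero, List.nil_append]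
  | succ k ih =>
    rw [List.replicate_succ, List.cons_append, mem_cons_zero M z0 hinit]
    exact ih

lemma vecVal_cons_zero {z0 : Fin d → Fin b} (hz0 : ∀ i, (z0 i : ℕ) = 0)
    (u : List (Fin d → Fin b)) (w : ℕ → Fin d → Fin b) :
    vecVal (z0 :: u) w = vecVal u w := by
  funext f
  show natVal b ((z0 :: u).map fun t => t f) + _ = _
  rw [show (z0 :: u).map (fun t => t f) = z0 f :: u.map (fun t => t f) from rfl, natVal_cons]
  rw [hz0 f]
  simp [vecVal]

lemma vecVal_pad {z0 : Fin d → Fin b} (hz0 : ∀ i, (z0 i : ℕ) = 0) (k : ℕ)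
    (u : List (Fin d → Fin b)) (w : ℕ → Fin d → Fin b) :
    vecVal (List.replicate k z0 ++ u) w = vecVal u w := by
  induction k with
  | zero => rw [List.replicate_zero, List.nil_append]
  | succ k ih =>
    rw [List.replicate_succ, List.cons_append, vecVal_cons_zero hz0]
    exact ih

end Pad

section Chain
variable {Q : Type} {b d : ℕ}

lemma encWord_ext {u u' : List (Fin d → Fin b)} {w w' : ℕ → Fin d → Fin b}
    (hlen : u'.length = u.length) (h : ∀ i, dseq u w i = dseq u' w' i) :
    encWord u w = encWord u' w' := by
  funext n
  by_cases hn : n = u.length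
  · rw [hn, (encWord_none_iff u w u.length).mpr rfl,
      (encWord_none_iff u' w' u.length).mpr hlen.symm]
  · have hpos : posOf u.length (if n < u.length then n else n - 1) = n := by
      unfold posOf
      split_ifs <;> omega
    rw [← hpos, encWord_posOf]
    have h2 := encWord_posOf u' w' (if n < u.length then n else n - 1)
    rw [hlen] at h2
    rw [h2]
    congr 1
    funext i
    exact congrFun (h i) _

lemma chain_transfer (hb : 2 ≤ b) (M : DBA (Option (Fin d → Fin b)) Q)
    (H : ∀ (f : Fin d) (x : List (Option (Fin d → Fin b))) (a : Fin d → Fin b)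
        (ha : (a f : ℕ) ≤ b - 2),
        ((fixDBA M f (⟨b - 1, fin_aux_sub hb⟩ : Fin b)).start
            (M.delta (M.deltaStar M.init x) (some a))).Lang =
        ((fixDBA M f (⟨0, fin_aux_zero hb⟩ : Fin b)).start
            (M.delta (M.deltaStar M.init x)
              (some fun i => if i = f then (⟨(a f : ℕ) + 1, fin_aux_succ hb a f ha⟩ : Fin b) else a i))).Lang)
    (U U' : List (Fin d → Fin b)) (w w' : ℕ → Fin d → Fin b)
    (hlen : U'.length = U.length) (hvec : vecVal U w = vecVal U' w')
    (hmem : encWord U w ∈ M.Lang) : encWord U' w' ∈ M.Lang := by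
  have hdi : ∀ f, dseq U w f = dseq U' w' f ∨ Carry b (dseq U w f) (dseq U' w' f) ∨
      Carry b (dseq U' w' f) (dseq U w f) :=
    fun f => fracVal_dichotomy hb (fracVal_dseq_eq hb hlen hvec f)
  set m := U.length with hm
  set Uj : ℕ → List (Fin d → Fin b) := fun j => List.ofFn (fun q : Fin m =>
    fun i => if (i : ℕ) < j then U'.get ⟨q, by rw [hlen]; exact q.isLt⟩ i
      else U.get ⟨q, q.isLt⟩ i) with hUj
  set Wj : ℕ → ℕ → Fin d → Fin b := fun j n i => if (i : ℕ) < j then w' n i else w n i with hWj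
  have hUjlen : ∀ j, (Uj j).length = m := fun j => by rw [hUj]; simp
  have hdseq : ∀ j i k, dseq (Uj j) (Wj j) i k
      = if (i : ℕ) < j then dseq U' w' i k else dseq U w i k := by
    intro j i k
    by_cases hk : k < m
    · have hk1 : k < (Uj j).length := by rw [hUjlen]; exact hk
      have hk2 : k < U'.length := by rw [hlen]; exact hk
      rw [dseq_apply, dif_pos hk1, List.get_eq_getElem]
      have hget : (Uj j)[k]'hk1
          = fun t : Fin d => if (t : ℕ) < j then U'.get ⟨k, hk2⟩ t else U.get ⟨k, hk⟩ t := by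
        simp only [hUj, List.getElem_ofFn]
      simp only [hget]
      by_cases hij : (i : ℕ) < j
      · rw [if_pos hij, if_pos hij, dseq_apply, dif_pos hk2]
      · rw [if_neg hij, if_neg hij, dseq_apply, dif_pos hk]
    · have hk1 : ¬ k < (Uj j).length := by rw [hUjlen]; exact hk
      have hk2 : ¬ k < U'.length := by rw [hlen]; exact hk
      rw [dseq_apply, dif_neg hk1, hUjlen]
      by_cases hij : (i : ℕ) < j
      · rw [hWj]
        simp only [if_pos hij]
        rw [dseq_apply, dif_neg hk2, hlen]
      · rw [hWj]
        simp only [if_neg hij]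
        rw [dseq_apply, dif_neg (show ¬ k < U.length from hk)]
  have main : ∀ j, encWord (Uj j) (Wj j) ∈ M.Lang := by
    intro j
    induction j with
    | zero =>
      have e : encWord (Uj 0) (Wj 0) = encWord U w :=
        encWord_ext ((hUjlen 0).symm ▸ rfl : U.length = (Uj 0).length)
          (fun i => funext fun k => by rw [hdseq, if_neg (by omega)])
      rw [e]; exact hmem
    | succ j ih =>
      by_cases hjd : j < d
      · set f : Fin d := ⟨j, hjd⟩ with hf
        have hfval : (f : ℕ) = j := rfl
        have hds1 : dseq (Uj j) (Wj j) f = dseq U w f :=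
          funext fun k => by rw [hdseq, hfval, if_neg (lt_irrefl j)]
        have hds2 : dseq (Uj (j+1)) (Wj (j+1)) f = dseq U' w' f :=
          funext fun k => by rw [hdseq, hfval, if_pos (by omega)]
        have hoff : ∀ i, i ≠ f → dseq (Uj j) (Wj j) i = dseq (Uj (j+1)) (Wj (j+1)) i := by
          intro i hi
          have hne : (i : ℕ) ≠ j := fun hc => hi (Fin.ext hc)
          funext k
          rw [hdseq, hdseq]
          by_cases hij : (i : ℕ) < j
          · rw [if_pos hij, if_pos (by omega)]
          · rw [if_neg hij, if_neg (by omega)]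
        have hlen2 : (Uj (j+1)).length = (Uj j).length := (hUjlen _).trans (hUjlen _).symm
        rcases hdi f with heq | hc | hc
        · have e : encWord (Uj (j+1)) (Wj (j+1)) = encWord (Uj j) (Wj j) := by
            refine encWord_ext hlen2.symm (fun i => ?_)
            by_cases hif : i = f
            · subst hif
              rw [hds1, hds2, heq]
            · exact (hoff i hif).symm
          rw [e]; exact ih
        · exact (step_transfer hb M H f (Uj j) (Wj j) (Uj (j+1)) (Wj (j+1)) hlen2 hoff
            (by rw [hds1, hds2]; exact hc)).mp ih
        · exact (step_transfer hb M H f (Uj (j+1)) (Wj (j+1)) (Uj j) (Wj j) hlen2.symm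
            (fun i hi => (hoff i hi).symm) (by rw [hds1, hds2]; exact hc)).mpr ih
      · have e : encWord (Uj (j+1)) (Wj (j+1)) = encWord (Uj j) (Wj j) := by
          refine encWord_ext ((hUjlen _).trans (hUjlen _).symm) (fun i => funext fun k => ?_)
          have hij : (i : ℕ) < j := by have := i.isLt; omega
          rw [hdseq, hdseq, if_pos hij, if_pos (by omega)]
        rw [e]; exact ih
  have e : encWord U' w' = encWord (Uj d) (Wj d) := by
    refine encWord_ext ((hUjlen d).trans hlen.symm) (fun i => funext fun k => ?_)
    rw [hdseq, if_pos i.isLt]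
  rw [e]
  exact main d

end Chain

/-- characterization of parallel RVAs via the automata `𝒜^{z@f}`. -/
theorem stmt12 {Q : Type} [Fintype Q] {b d : ℕ} (hb : 2 ≤ b) (hd : 0 < d)
    (M : DBA (Option (Fin d → Fin b)) Q) (hweak : M.Weak) (hmin : M.Minimal)
    (hshape : ∀ x ∈ M.Lang, ∃ u w, x = encWord u w)
    (hinit : M.delta M.init (some fun _ => (⟨0, by omega⟩ : Fin b)) = M.init) :
    Saturated M.Lang ↔
      ∀ (f : Fin d) (x : List (Option (Fin d → Fin b))) (a : Fin d → Fin b)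
        (ha : (a f : ℕ) ≤ b - 2),
        ((fixDBA M f (⟨b - 1, by omega⟩ : Fin b)).start
            (M.delta (M.deltaStar M.init x) (some a))).Lang =
        ((fixDBA M f (⟨0, by omega⟩ : Fin b)).start
            (M.delta (M.deltaStar M.init x)
              (some fun i => if i = f then (⟨(a f : ℕ) + 1, by omega⟩ : Fin b) else a i))).Lang := by
  constructor
  · intro hsat f x a ha
    ext y
    have e1 := fix_lang_iff M f (⟨b - 1, by omega⟩ : Fin b) x a y
    have e2 := fix_lang_iff M f (⟨0, by omega⟩ : Fin b) x
      (fun i => if i = f then (⟨(a f : ℕ) + 1, by omega⟩ : Fin b) else a i) y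
    exact e1.trans ((sat_step hb M hshape hsat f x a ha y).trans e2.symm)
  · intro H u w u' w' hvec hmem
    have hz0v : ∀ i : Fin d, ((fun _ : Fin d => (⟨0, by omega⟩ : Fin b)) i : ℕ) = 0 := fun _ => rfl
    have hinit' : M.delta M.init (some (fun _ : Fin d => (⟨0, by omega⟩ : Fin b))) = M.init := hinit
    have h1 : encWord (List.replicate u'.length (fun _ : Fin d => (⟨0, by omega⟩ : Fin b)) ++ u) w ∈ M.Lang :=
      (mem_pad M _ hinit' u'.length u w).mpr hmem
    have hvec1 : vecVal (List.replicate u'.length (fun _ : Fin d => (⟨0, by omega⟩ : Fin b)) ++ u) w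
        = vecVal (List.replicate u.length (fun _ : Fin d => (⟨0, by omega⟩ : Fin b)) ++ u') w' := by
      rw [vecVal_pad hz0v, vecVal_pad hz0v]
      exact hvec
    have hlen1 : (List.replicate u.length (fun _ : Fin d => (⟨0, by omega⟩ : Fin b)) ++ u').length
        = (List.replicate u'.length (fun _ : Fin d => (⟨0, by omega⟩ : Fin b)) ++ u).length := by
      simp only [List.length_append, List.length_replicate]
      omega
    have h2 := chain_transfer hb M H _ _ w w' hlen1 hvec1 h1
    exact (mem_pad M _ hinit' u.length u' w').mp h2
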